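/- An R-module M is flat if and only if M can be written as a filtered colimit of finitely generated free R-modules. -/

import Mathlib

open CategoryTheory CategoryTheory.Limits

universe u

section Lazard

variable (R : Type u) [CommRing R] (M : Type u) [AddCommGroup M] [Module R M]

structure LazardObj where
  n : ℕ
  x : (Fin n → R) →ₗ[R] M

variable {R M}

instance : SmallCategory (LazardObj R M) where
  Hom P Q := {a : (Fin P.n → R) →ₗ[R] (Fin Q.n → R) // Q.x ∘ₗ a = P.x}
  id P := ⟨LinearMap.id, LinearMap.comp_id _⟩
  comp f g := ⟨g.1 ∘ₗ f.1, by rw [← LinearMap.comp_assoc, g.2, f.2]⟩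

@[simp] lemma LazardObj.id_coe (P : LazardObj R M) : (𝟙 P : P ⟶ P).1 = LinearMap.id := rfl
@[simp] lemma LazardObj.comp_coe {P Q Z : LazardObj R M} (f : P ⟶ Q) (g : Q ⟶ Z) :
    (f ≫ g).1 = g.1 ∘ₗ f.1 := rfl

variable (R M)

def lazardDiagram : LazardObj R M ⥤ ModuleCat.{u} R where
  obj P := ModuleCat.of R (Fin P.n → R)
  map f := ModuleCat.ofHom f.1
  map_id _ := rfl
  map_comp _ _ := rfl

variable {R M}

noncomputable def lazardSplit (n m : ℕ) :
    (Fin (n + m) → R) ≃ₗ[R] (Fin n → R) × (Fin m → R) :=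
  (LinearEquiv.funCongrLeft R R finSumFinEquiv.symm).symm.trans
    (LinearEquiv.sumArrowLequivProdArrow _ _ R R)

theorem lazardFiltered [Module.Flat R M] : IsFiltered (LazardObj R M) := by
  have h1 : IsFilteredOrEmpty (LazardObj R M) := by
    constructor
    · intro P Q
      refine ⟨⟨P.n + Q.n, (P.x.coprod Q.x) ∘ₗ (lazardSplit P.n Q.n).toLinearMap⟩,
        ⟨(lazardSplit P.n Q.n).symm.toLinearMap ∘ₗ LinearMap.inl R _ _, ?_⟩,
        ⟨(lazardSplit P.n Q.n).symm.toLinearMap ∘ₗ LinearMap.inr R _ _, ?_⟩, trivial⟩ <;>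
      · ext v
        simp [LinearMap.coprod_apply]
    · intro P Q f g
      have h : Q.x ∘ₗ (f.1 - g.1) = 0 := by
        rw [LinearMap.comp_sub, f.2, g.2, sub_self]
      obtain ⟨k, a, y, hay, ha⟩ :=
        Module.Flat.exists_factorization_of_comp_eq_zero_of_free h
      let e : (Fin k →₀ R) ≃ₗ[R] (Fin (Fintype.card (Fin k)) → R) :=
        (Finsupp.linearEquivFunOnFinite R R (Fin k)).trans
          (LinearEquiv.funCongrLeft R R (Fintype.equivFin (Fin k)).symm)
      refine ⟨⟨Fintype.card (Fin k), y ∘ₗ e.symm.toLinearMap⟩,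
        ⟨e.toLinearMap ∘ₗ a, ?_⟩, ?_⟩
      · ext v
        simp [hay]
      · apply Subtype.ext
        have : a ∘ₗ f.1 = a ∘ₗ g.1 := by
          rw [← sub_eq_zero, ← LinearMap.comp_sub]; exact ha
        simp only [LazardObj.comp_coe, LinearMap.comp_assoc, this]
  have : Nonempty (LazardObj R M) := ⟨⟨0, 0⟩⟩
  exact IsFiltered.mk

variable (R M)

def lazardCocone : Cocone (lazardDiagram R M) where
  pt := ModuleCat.of R M
  ι := { app := fun P => ModuleCat.ofHom P.x
         naturality := fun P Q f => by
           ext v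
           exact LinearMap.congr_fun f.2 v }

variable {M}

def lazardObj1 (m : M) : LazardObj R M :=
  ⟨1, (LinearMap.proj 0).smulRight m⟩

@[simp] lemma lazardObj1_n (m : M) : (lazardObj1 R m).n = 1 := rfl
@[simp] lemma lazardObj1_x (m : M) (v : Fin 1 → R) : (lazardObj1 R m).x v = v 0 • m := rfl

variable {R}

lemma lazard_ι_naturality {s : Cocone (lazardDiagram R M)} {P Q : LazardObj R M}
    (t : P ⟶ Q) (v : Fin P.n → R) :
    s.ι.app Q (t.1 v) = s.ι.app P v :=
  LinearMap.congr_fun (congrArg ModuleCat.Hom.hom (s.w t)) v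

noncomputable def lazardDescFun (s : Cocone (lazardDiagram R M)) (m : M) : ↑s.pt :=
  s.ι.app (lazardObj1 R m) (fun _ => 1)

lemma lazardDescFun_add (s : Cocone (lazardDiagram R M)) (m m' : M) :
    lazardDescFun s (m + m') = lazardDescFun s m + lazardDescFun s m' := by
  let T : LazardObj R M := ⟨2, (LinearMap.proj 0).smulRight m + (LinearMap.proj 1).smulRight m'⟩
  have hi : T.x ∘ₗ ((LinearMap.single R (fun _ : Fin 2 => R) 0) ∘ₗ
      (LinearMap.proj (0 : Fin 1) : (Fin 1 → R) →ₗ[R] R)) = (lazardObj1 R m).x := by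
    refine LinearMap.ext fun v => ?_
    show T.x (Pi.single 0 (v 0)) = v 0 • m
    simp [T, Pi.single_apply]
  have hj : T.x ∘ₗ ((LinearMap.single R (fun _ : Fin 2 => R) 1) ∘ₗ
      (LinearMap.proj (0 : Fin 1) : (Fin 1 → R) →ₗ[R] R)) = (lazardObj1 R m').x := by
    refine LinearMap.ext fun v => ?_
    show T.x (Pi.single 1 (v 0)) = v 0 • m'
    simp [T, Pi.single_apply]
  have hk : T.x ∘ₗ (((LinearMap.proj (0 : Fin 1) : (Fin 1 → R) →ₗ[R] R)).smulRight
      (fun _ : Fin 2 => (1:R))) = (lazardObj1 R (m + m')).x := by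
    refine LinearMap.ext fun v => ?_
    show T.x (v 0 • fun _ : Fin 2 => (1:R)) = v 0 • (m + m')
    simp [T, smul_add]
  let ti : lazardObj1 R m ⟶ T := ⟨_, hi⟩
  let tj : lazardObj1 R m' ⟶ T := ⟨_, hj⟩
  let tk : lazardObj1 R (m + m') ⟶ T := ⟨_, hk⟩
  have e1 := lazard_ι_naturality (s := s) ti (fun _ => 1)
  have e2 := lazard_ι_naturality (s := s) tj (fun _ => 1)
  have e3 := lazard_ι_naturality (s := s) tk (fun _ => 1)
  have a1 : ti.1 (fun _ => 1) = Pi.single (0 : Fin 2) (1:R) := by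
    funext j; show (Pi.single (0 : Fin 2) ((fun _ : Fin 1 => (1:R)) 0) : Fin 2 → R) j = _; simp [ti, Pi.single_apply]
  have a2 : tj.1 (fun _ => 1) = Pi.single (1 : Fin 2) (1:R) := by
    funext j; show (Pi.single (1 : Fin 2) ((fun _ : Fin 1 => (1:R)) 0) : Fin 2 → R) j = _; simp [tj, Pi.single_apply]
  have a3 : tk.1 (fun _ => 1) = fun _ : Fin 2 => (1:R) := by
    funext j; show ((fun _ : Fin 1 => (1:R)) 0 • fun _ : Fin 2 => (1:R)) j = 1; simp [tk]
  rw [a1] at e1; rw [a2] at e2; rw [a3] at e3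
  unfold lazardDescFun
  rw [← e1, ← e2, ← e3]
  have hsum : (fun _ : Fin 2 => (1:R))
      = (Pi.single (0 : Fin 2) (1:R)) + (Pi.single (1 : Fin 2) (1:R)) := by
    funext i; fin_cases i <;> simp [Pi.single_apply]
  rw [hsum]
  exact LinearMap.map_add (s.ι.app T).hom _ _

lemma lazardDescFun_smul (s : Cocone (lazardDiagram R M)) (r : R) (m : M) :
    lazardDescFun s (r • m) = r • lazardDescFun s m := by
  have hr : (lazardObj1 R m).x ∘ₗ (r • LinearMap.id) = (lazardObj1 R (r • m)).x := by
    refine LinearMap.ext fun (v : Fin 1 → R) => ?_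
    show (r • v) 0 • m = v 0 • (r • m)
    rw [Pi.smul_apply, smul_eq_mul, mul_smul, smul_comm]
  let t : lazardObj1 R (r • m) ⟶ lazardObj1 R m := ⟨_, hr⟩
  have e := lazard_ι_naturality (s := s) t (fun _ => 1)
  have a : t.1 (fun _ => 1) = r • (fun _ : Fin 1 => (1:R)) := by
    funext j; rfl
  rw [a] at e
  unfold lazardDescFun
  rw [← e]
  exact LinearMap.map_smul (s.ι.app (lazardObj1 R m)).hom r _

variable (R M)

noncomputable def lazardIsColimit : IsColimit (lazardCocone R M) where
  desc s := ModuleCat.ofHom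
    { toFun := lazardDescFun s
      map_add' := lazardDescFun_add s
      map_smul' := lazardDescFun_smul s }
  fac := by
    intro s P
    apply ModuleCat.hom_ext
    apply LinearMap.pi_ext'
    intro i
    refine LinearMap.ext fun r => ?_
    show lazardDescFun s (P.x (Pi.single i r)) = s.ι.app P (Pi.single i r)
    have ht : P.x ∘ₗ ((LinearMap.single R (fun _ : Fin P.n => R) i) ∘ₗ
        ((r : R) • (LinearMap.proj (0 : Fin 1) : (Fin 1 → R) →ₗ[R] R)))
        = (lazardObj1 R (P.x (Pi.single i r))).x := by
      refine LinearMap.ext fun v => ?_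
      show P.x (Pi.single i (r * v 0)) = v 0 • P.x (Pi.single i r)
      rw [mul_comm, ← smul_eq_mul, Pi.single_smul, map_smul]
    let t : lazardObj1 R (P.x (Pi.single i r)) ⟶ P := ⟨_, ht⟩
    have e := lazard_ι_naturality (s := s) t (fun _ => 1)
    have a : t.1 (fun _ => 1) = Pi.single i r := by
      show (Pi.single i (r • (fun _ : Fin 1 => (1:R)) 0) : Fin P.n → R) = _; simp [t]
    rw [a] at e
    unfold lazardDescFun
    rw [← e]
  uniq := by
    intro s m hm
    refine ModuleCat.hom_ext (LinearMap.ext fun x => ?_)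
    show m x = lazardDescFun s x
    have hx : (lazardCocone R M).ι.app (lazardObj1 R x) (fun _ => 1) = x := one_smul R x
    conv_lhs => rw [← hx]
    exact LinearMap.congr_fun (congrArg ModuleCat.Hom.hom (hm (lazardObj1 R x))) (fun _ => 1)
end Lazard

/-- **Lazard's theorem**: a module `M` over a ring `R` is flat if and only if `M` can be
written as a filtered colimit of finitely generated free `R`-modules. -/
theorem lazard_flat_iff_filtered_colimit_of_finite_free
    (R : Type u) [CommRing R] (M : Type u) [AddCommGroup M] [Module R M] :
    Module.Flat R M ↔
      ∃ (J : Type u) (_ : SmallCategory J) (_ : IsFiltered J) (F : J ⥤ ModuleCat.{u} R)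
        (c : Cocone F) (_ : IsColimit c),
        (∀ j : J, Module.Free R (F.obj j) ∧ Module.Finite R (F.obj j)) ∧
          Nonempty (c.pt ≅ ModuleCat.of R M) := by
  constructor
  · intro hM
    exact ⟨LazardObj R M, inferInstance, lazardFiltered, lazardDiagram R M,
      lazardCocone R M, lazardIsColimit R M,
      fun j => ⟨inferInstanceAs (Module.Free R (Fin j.n → R)),
        inferInstanceAs (Module.Finite R (Fin j.n → R))⟩,
      ⟨Iso.refl _⟩⟩
  · rintro ⟨J, _, _, F, c, hc, hfree, ⟨e⟩⟩
    rw [Module.Flat.iff_forall_isTrivialRelation]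
    intro ι f x hfx
    classical
    let ei : M →ₗ[R] ↑c.pt := e.inv.hom
    let eh : ↑c.pt →ₗ[R] M := e.hom.hom
    have hei : ∀ m : M, eh (ei m) = m := fun m => LinearMap.congr_fun (congrArg ModuleCat.Hom.hom e.inv_hom_id) m
    -- send the elements into the colimit
    choose j y hy using fun i => Concrete.isColimit_exists_rep F hc (ei (x i))
    obtain ⟨S, hS⟩ := IsFiltered.sup_objs_exists (Finset.image j Finset.univ)
    have ht : ∀ i, Nonempty (j i ⟶ S) := fun i =>
      hS (Finset.mem_image_of_mem j (Finset.mem_univ i))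
    let t : ∀ i, j i ⟶ S := fun i => (ht i).some
    let y' : Fin ι → ↑(F.obj S) := fun i => F.map (t i) (y i)
    let cS : ↑(F.obj S) →ₗ[R] ↑c.pt := (c.ι.app S).hom
    have h1 : ∀ i, cS (y' i) = ei (x i) := fun i => by
      have h2 : c.ι.app S (F.map (t i) (y i)) = c.ι.app (j i) (y i) :=
        LinearMap.congr_fun (congrArg ModuleCat.Hom.hom (c.w (t i))) (y i)
      exact h2.trans (hy i)
    let w : ↑(F.obj S) := ∑ i, f i • y' i
    have hcw : cS w = cS 0 := by
      rw [map_zero, map_sum]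
      simp_rw [map_smul, h1, ← map_smul ei, ← map_sum, hfx, map_zero]
    obtain ⟨k, g1, g2, hg⟩ := Concrete.isColimit_exists_of_rep_eq F hc w 0 hcw
    have hg0 : F.map g1 w = 0 := hg.trans (LinearMap.map_zero (F.map g2).hom)
    haveI : Module.Free R ↑(F.obj k) := (hfree k).1
    haveI : Module.Finite R ↑(F.obj k) := (hfree k).2
    let b := (Module.Free.chooseBasis R ↑(F.obj k)).reindex (Fintype.equivFin _)
    let g : ↑(F.obj S) →ₗ[R] ↑(F.obj k) := (F.map g1).hom
    let ck : ↑(F.obj k) →ₗ[R] ↑c.pt := (c.ι.app k).hom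
    have hck : ∀ v : ↑(F.obj S), ck (g v) = cS v := fun v =>
      LinearMap.congr_fun (congrArg ModuleCat.Hom.hom (c.w g1)) v
    refine ⟨Fintype.card (Module.Free.ChooseBasisIndex R ↑(F.obj k)),
      fun i q => b.repr (g (y' i)) q,
      fun q => eh (ck (b q)), ?_, ?_⟩
    · intro i
      have hzk : ei (x i) = ck (g (y' i)) := by rw [hck, h1]
      calc x i = eh (ei (x i)) := (hei _).symm
        _ = eh (ck (g (y' i))) := by rw [hzk]
        _ = eh (ck (∑ q, b.repr (g (y' i)) q • b q)) := by rw [Module.Basis.sum_repr]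
        _ = ∑ q, b.repr (g (y' i)) q • eh (ck (b q)) := by
            rw [map_sum, map_sum]
            simp_rw [map_smul]
    · intro q
      have hgw : g w = 0 := hg0
      have hrepr : b.repr (g w) q = 0 := by rw [hgw, map_zero]; rfl
      rw [show g w = ∑ i, f i • g (y' i) by rw [map_sum]; simp_rw [map_smul]] at hrepr
      rw [map_sum] at hrepr
      rw [← hrepr]
      simp [Finsupp.smul_apply, smul_eq_mul]
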